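/- arXiv:2003.01633 — 3 statements merged into one kernel-verified Lean document; each statement's English description precedes it below -/
import Mathlib

section
/- Fix an integer n ≥ 2 and strictly positive real numbers α_1, …, α_{n²}. Let I = ∏_{i=1}^{n²} (0, α_i) ⊆ ℝ^{n²}, let (1+1/n)I = ∏_{i=1}^{n²} (0, (1+1/n)α_i), and let J = {x = (x_1,…,x_{n²}) ∈ (1+1/n)I : #{i ∈ {1,…,n²} : x_i ∈ [α_i, (1+1/n)α_i)} ≥ 4n}. Then for every x ∈ (1+1/n)I \ J there exists y ∈ ℝ^{n²} such that x ∈ y + I and |(I + y) ∩ I| > e^{-8}·|I|. -/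
open MeasureTheory Filter Topology Set
open scoped ENNReal

noncomputable section

/-- The one-dimensional torus `𝕋 = ℝ/ℤ`. -/
abbrev 𝕋 : Type := AddCircle (1 : ℝ)

/-- The infinite-dimensional torus `𝕋^ω`. -/
abbrev Tω : Type := ℕ → 𝕋

/-- The normalized Haar measure `m` on `𝕋^ω` (which coincides with the countable
product of the Lebesgue probability measures on the factors). -/
def haarTω : Measure Tω := Measure.addHaarMeasure ⊤

/-- The metric `ρ(g,h) = ∑ₙ 2⁻ⁿ · min(|gₙ−hₙ|, 1−|gₙ−hₙ|)`; the norm on `AddCircle 1`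
is exactly `min(|·|, 1−|·|)` of a representative. Coordinates are indexed from `0`. -/
def rho (g h : Tω) : ℝ := ∑' n : ℕ, (1 / 2 : ℝ) ^ (n + 1) * ‖g n - h n‖

/-- The diameter of a set with respect to `ρ`. -/
def diam (E : Set Tω) : ℝ := sSup (Set.image2 rho E E)

/-- The average `f_E = m(E)⁻¹ ∫_E f dm`. -/
def avg (f : Tω → ℝ) (E : Set Tω) : ℝ := ⨍ x in E, f x ∂haarTω

/-- `B(g) = {B ∈ 𝓑 : g ∈ closure B}` (non-centered basis associated to a collection). -/
def basisOf (𝓑 : Set (Set Tω)) (g : Tω) : Set (Set Tω) := {B ∈ 𝓑 | g ∈ closure B}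

/-- `M_B f (g) > lam`, i.e. `sup_{B ∈ bas g} |f_B| > lam`. -/
def maximalGT (bas : Tω → Set (Set Tω)) (f : Tω → ℝ) (g : Tω) (lam : ℝ) : Prop :=
  ∃ B ∈ bas g, lam < |avg f B|

/-- `M_{B,r₀} f (g) > lam` for the truncated maximal operator. -/
def maximalTruncGT (bas : Tω → Set (Set Tω)) (r₀ : ℝ) (f : Tω → ℝ) (g : Tω) (lam : ℝ) :
    Prop :=
  ∃ B ∈ bas g, diam B < r₀ ∧ lam < |avg f B|

/-- A sequence `S` contracts to `g` (written `Sₙ ⇒ g`). -/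
def ContractsTo (bas : Tω → Set (Set Tω)) (S : ℕ → Set Tω) (g : Tω) : Prop :=
  (∀ n, S n ∈ bas g) ∧ Tendsto (fun n => diam (S n)) atTop (𝓝 0)

/-- A general differentiation basis: each `B ∈ bas g` is measurable, of strictly positive
measure, with `g` in its closure, and each `g` admits a contracting sequence. -/
def IsGeneralBasis (bas : Tω → Set (Set Tω)) : Prop :=
  (∀ g, ∀ B ∈ bas g, MeasurableSet B ∧ 0 < haarTω B ∧ g ∈ closure B) ∧
  (∀ g, ∃ S : ℕ → Set Tω, ContractsTo bas S g)

/-- `bas` differentiates `L¹(𝕋^ω)`. -/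
def DifferentiatesL1 (bas : Tω → Set (Set Tω)) : Prop :=
  ∀ f : Tω → ℝ, Integrable f haarTω →
    ∀ᵐ g ∂haarTω, ∀ S : ℕ → Set Tω, ContractsTo bas S g →
      Tendsto (fun n => avg f (S n)) atTop (𝓝 (f g))

/-- The maximal operator of `bas` is of weak type (1,1). -/
def WeakType11 (bas : Tω → Set (Set Tω)) : Prop :=
  ∃ C : ℝ, 0 < C ∧ ∀ f : Tω → ℝ, Integrable f haarTω → ∀ lam : ℝ, 0 < lam →
    lam * (haarTω {g | maximalGT bas f g lam}).toReal ≤ C * ∫ x, |f x| ∂haarTω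

/-- An interval of `𝕋`: the image under the quotient map `ℝ → ℝ/ℤ` of an interval
of `ℝ` of length at most 1. -/
def IsArc (S : Set 𝕋) : Prop :=
  ∃ J : Set ℝ, J.OrdConnected ∧ (∃ a : ℝ, J ⊆ Set.Icc a (a + 1)) ∧
    S = (fun x : ℝ => (x : 𝕋)) '' J

/-- An interval of `𝕋^ω`: a product of intervals of `𝕋`, all but finitely many
of which are the whole `𝕋`. -/
def IsBox (I : Set Tω) : Prop :=
  ∃ (s : Finset ℕ) (F : ℕ → Set 𝕋), (∀ n, IsArc (F n)) ∧ (∀ n ∉ s, F n = Set.univ) ∧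
    I = Set.pi Set.univ F

/-- Conditions (B1)–(B3) for a collection of subsets of `𝕋^ω` of strictly positive
measure: (B1) every element is an interval; (B2) translation invariance;
(B3) elements of arbitrarily small diameter. -/
def SatisfiesB (𝓑 : Set (Set Tω)) : Prop :=
  (∀ B ∈ 𝓑, 0 < haarTω B) ∧
  (∀ B ∈ 𝓑, IsBox B) ∧
  (∀ B ∈ 𝓑, ∀ g : Tω, (fun x => g + x) '' B ∈ 𝓑) ∧
  (∀ ε : ℝ, 0 < ε → ∃ B ∈ 𝓑, diam B < ε)

/-- The image in `𝕋` of the real interval `(0, l)`. -/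
def arc (l : ℝ) : Set 𝕋 := (fun x : ℝ => (x : 𝕋)) '' Set.Ioo 0 l

/-- For `n = m² + r` with `m = ⌊√n⌋`, `0 ≤ r ≤ 2m`, this encodes the side of the
`i`-th coordinate (0-indexed) of `V_n`: `some k` means the side `(0, 2⁻ᵏ)`, and
`none` means the whole `𝕋`. -/
def sideLen (n i : ℕ) : Option ℕ :=
  let m := Nat.sqrt n
  let r := n - m * m
  if r = 0 then (if i < m then some m else none)
  else if r ≤ m then (if i < m then some m else if i = m then some r else none)
  else (if i < r - m then some (m + 1) else if i < m + 1 then some m else none)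

/-- The open interval `V_n ⊆ 𝕋^ω`. -/
def Vcell (n : ℕ) : Set Tω :=
  Set.pi Set.univ fun i => match sideLen n i with
    | some k => arc ((2 : ℝ)⁻¹ ^ k)
    | none => Set.univ

/-- The Rubio de Francia basis `R = {g + Vₙ : n ≥ 1, g ∈ 𝕋^ω}`. -/
def RdF : Set (Set Tω) := {S | ∃ n : ℕ, 1 ≤ n ∧ ∃ g : Tω, S = (fun x => g + x) '' Vcell n}

/-- `δ_k^B = sup{ m(E) : E measurable, ∃ f ∈ L¹, λ > 0, M_B f > λ on E and
λ·m(E) > 2^k·‖f‖₁ }` (with `sup ∅ = 0`). -/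
def deltaK (bas : Tω → Set (Set Tω)) (k : ℕ) : ℝ≥0∞ :=
  sSup {v : ℝ≥0∞ | ∃ E : Set Tω, MeasurableSet E ∧ v = haarTω E ∧
    ∃ f : Tω → ℝ, Integrable f haarTω ∧ ∃ lam : ℝ, 0 < lam ∧
      (∀ g ∈ E, maximalGT bas f g lam) ∧
      ENNReal.ofReal ((2 : ℝ) ^ k * ∫ x, |f x| ∂haarTω) < ENNReal.ofReal lam * haarTω E}

/-- `δ̃_k^B`: as `δ_k^B`, with `M_B` replaced by the truncated operator `M_{B,α_k}`. -/
def deltaTildeK (bas : Tω → Set (Set Tω)) (α : ℕ → ℝ) (k : ℕ) : ℝ≥0∞ :=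
  sSup {v : ℝ≥0∞ | ∃ E : Set Tω, MeasurableSet E ∧ v = haarTω E ∧
    ∃ f : Tω → ℝ, Integrable f haarTω ∧ ∃ lam : ℝ, 0 < lam ∧
      (∀ g ∈ E, maximalTruncGT bas (α k) f g lam) ∧
      ENNReal.ofReal ((2 : ℝ) ^ k * ∫ x, |f x| ∂haarTω) < ENNReal.ofReal lam * haarTω E}

/-- Condition (M). -/
def CondM (bas : Tω → Set (Set Tω)) : Prop :=
  ∃ F : Set Tω, haarTω Fᶜ = 0 ∧ ∀ g ∈ F, ∀ ε : ℝ, 0 < ε → ∃ δ : ℝ, 0 < δ ∧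
    ∀ E ∈ bas g, haarTω E < ENNReal.ofReal δ → diam E < ε

instance : Fact ((0 : ℝ) < 1) := ⟨one_pos⟩

/-- The canonical representative in `[0,1)` of a point of `𝕋`. -/
def rep (x : 𝕋) : ℝ := ((AddCircle.equivIco 1 0 x : Set.Ico (0 : ℝ) (0 + 1)) : ℝ)

/-- The cylinder set over the coordinates `K+1, …, K+(L+1)²` (paper numbering, i.e.
0-indexed coordinates `K, …, K+(L+1)²-1`) determined by `S ⊆ [0,1)^{(L+1)²}`. -/
def cylinder (K L : ℕ) (S : Set (Fin ((L + 1) ^ 2) → ℝ)) : Set Tω :=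
  {g | (fun j : Fin ((L + 1) ^ 2) => rep (g (K + (j : ℕ)))) ∈ S}

/-- `U_n = (0,2⁻ⁿ)ⁿ × ∏_{i>n} 𝕋`. -/
def Ucell (n : ℕ) : Set Tω :=
  Set.pi Set.univ fun i => if i < n then arc ((2 : ℝ)⁻¹ ^ n) else Set.univ

/-- `e_{n,i}`: the element whose `i`-th coordinate (0-indexed) is `2⁻ⁿ`, others `0`. -/
def evec (n i : ℕ) : Tω := fun j => if j = i then (((2 : ℝ)⁻¹ ^ n : ℝ) : 𝕋) else 0

/-- `U_{n,i} = U_n ∪ (e_{n,i} + U_n)`. -/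
def Uni (n i : ℕ) : Set Tω := Ucell n ∪ ((fun x => evec n i + x) '' Ucell n)

/-- The collection `D₀ = {U_{n,i} : n ≥ 1, 1 ≤ i ≤ n}` (0-indexed: `i < n`). -/
def D0 : Set (Set Tω) := {S | ∃ n : ℕ, 1 ≤ n ∧ ∃ i : ℕ, i < n ∧ S = Uni n i}

/-- The open box `∏ᵢ (0, αᵢ) ⊆ ℝ^{n²}`. -/
def box (n : ℕ) (α : Fin (n ^ 2) → ℝ) : Set (Fin (n ^ 2) → ℝ) :=
  Set.pi Set.univ fun i => Set.Ioo 0 (α i)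

/-- The dilated box `(1+1/n)·∏ᵢ (0, αᵢ)`. -/
def bigBox (n : ℕ) (α : Fin (n ^ 2) → ℝ) : Set (Fin (n ^ 2) → ℝ) :=
  Set.pi Set.univ fun i => Set.Ioo 0 ((1 + 1 / (n : ℝ)) * α i)

open Classical in
/-- The set `J` of points of the dilated box having at least `4n` coordinates `xᵢ` with
`xᵢ ∈ [αᵢ, (1+1/n)αᵢ)`. -/
def Jset (n : ℕ) (α : Fin (n ^ 2) → ℝ) : Set (Fin (n ^ 2) → ℝ) :=
  {x ∈ bigBox n α |
    4 * n ≤ (Finset.univ.filter fun i => x i ∈ Set.Ico (α i) ((1 + 1 / (n : ℝ)) * α i)).card}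

end

/-- Lemma 3.2: For `n ≥ 2`, every `x ∈ (1+1/n)·I \ J` admits `y ∈ ℝ^{n²}`
with `x ∈ y + I` and `|(I + y) ∩ I| > e⁻⁸·|I|`. -/
theorem exists_translate_large_overlap (n : ℕ) (hn : 2 ≤ n) (α : Fin (n ^ 2) → ℝ)
    (hα : ∀ i, 0 < α i) :
    ∀ x ∈ bigBox n α \ Jset n α, ∃ y : Fin (n ^ 2) → ℝ,
      x ∈ (fun z => y + z) '' box n α ∧
      ENNReal.ofReal (Real.exp (-8)) * volume (box n α) <
        volume (((fun z => y + z) '' box n α) ∩ box n α) := by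

  classical
  intro x hx
  obtain ⟨hxB, hxJ⟩ := hx
  have hn0 : (0 : ℝ) < n := by positivity
  have hn1 : (1 : ℝ)/n < 1 := by
    rw [div_lt_one hn0]; exact_mod_cast lt_of_lt_of_le one_lt_two hn
  have h2n : (2:ℝ) ≤ n := by exact_mod_cast hn
  set y : Fin (n ^ 2) → ℝ := fun i => if α i ≤ x i then α i / n else 0 with hy
  have hy0 : ∀ i, 0 ≤ y i := by
    intro i; simp only [hy]; split
    · exact div_nonneg (hα i).le hn0.le
    · exact le_refl 0
  -- the bad set
  set s : Finset (Fin (n ^ 2)) := Finset.univ.filter (fun i => α i ≤ x i) with hs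
  have hsJ : s = Finset.univ.filter
      (fun i => x i ∈ Set.Ico (α i) ((1 + 1 / (n : ℝ)) * α i)) := by
    apply Finset.filter_congr
    intro i _
    have hxi := hxB i (Set.mem_univ i)
    simp only [Set.mem_Ioo] at hxi
    simp only [Set.mem_Ico, eq_iff_iff]
    exact ⟨fun h => ⟨h, hxi.2⟩, fun h => h.1⟩
  have hcard : s.card < 4 * n := by
    by_contra hc
    push_neg at hc
    exact hxJ ⟨hxB, by rw [← hsJ]; exact_mod_cast hc⟩
  -- membership
  have hmem : x ∈ (fun z => y + z) '' box n α := by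
    refine ⟨x - y, fun i _ => ?_, by
      funext i; simp only [Pi.add_apply, Pi.sub_apply]; ring⟩
    have hxi := hxB i (Set.mem_univ i)
    simp only [Set.mem_Ioo] at hxi
    have hai := hα i
    simp only [Pi.sub_apply, Set.mem_Ioo, hy]
    split
    · constructor
      · have : α i / n < α i := by
          rw [div_lt_iff₀ hn0]; nlinarith [hα i]
        linarith
      · have : x i < α i + α i / n := by
          have : (1 + 1 / (n : ℝ)) * α i = α i + α i / n := by ring
          linarith [hxi.2, this ▸ hxi.2]
        linarith
    · next h =>
      push_neg at h
      exact ⟨by linarith [hxi.1], by linarith⟩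
  refine ⟨y, hmem, ?_⟩
  -- image of box
  have himg : (fun z => y + z) '' box n α
      = Set.pi Set.univ (fun i => Set.Ioo (y i) (y i + α i)) := by
    ext z
    simp only [Set.mem_image, box, Set.mem_pi, Set.mem_univ, forall_true_left,
      Set.mem_Ioo]
    constructor
    · rintro ⟨w, hw, rfl⟩ i
      have := hw i
      simp only [Pi.add_apply]
      constructor <;> linarith [this.1, this.2]
    · intro hz
      refine ⟨z - y, fun i => ?_, by
        funext i; simp only [Pi.add_apply, Pi.sub_apply]; ring⟩
      have := hz i
      simp only [Pi.sub_apply]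
      constructor <;> linarith [this.1, this.2]
  have hinter : ((fun z => y + z) '' box n α) ∩ box n α
      = Set.pi Set.univ (fun i => Set.Ioo (y i) (α i)) := by
    rw [himg, box, ← Set.pi_inter_distrib]
    refine Set.pi_congr rfl fun i _ => ?_
    rw [Set.Ioo_inter_Ioo, max_eq_left (hy0 i),
      min_eq_right (by linarith [hy0 i] : α i ≤ y i + α i)]
  -- volumes
  have hvol1 : volume (box n α) = ENNReal.ofReal (∏ i, α i) := by
    rw [box, volume_pi_pi]
    rw [ENNReal.ofReal_prod_of_nonneg (fun i _ => (hα i).le)]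
    congr 1; funext i; rw [Real.volume_Ioo, sub_zero]
  have hvol2 : volume (((fun z => y + z) '' box n α) ∩ box n α)
      = ENNReal.ofReal (∏ i, (α i - y i)) := by
    rw [hinter, volume_pi_pi]
    rw [ENNReal.ofReal_prod_of_nonneg]
    · congr 1; funext i; rw [Real.volume_Ioo]
    · intro i _
      simp only [hy]; split
      · have := hα i
        rw [sub_nonneg, div_le_iff₀ hn0]; nlinarith [hα i]
      · linarith [hα i]
  -- product factorization
  have hprod : ∏ i, (α i - y i) = (1 - 1/(n:ℝ)) ^ s.card * ∏ i, α i := by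
    have : ∀ i, α i - y i = (if α i ≤ x i then (1 - 1/(n:ℝ)) else 1) * α i := by
      intro i
      simp only [hy]; split <;> ring
    simp_rw [this]
    rw [Finset.prod_mul_distrib, Finset.prod_ite, Finset.prod_const,
      Finset.prod_const_one, mul_one]
  -- key real inequality
  have hkey : Real.exp (-8) < (1 - 1/(n:ℝ)) ^ s.card := by
    have h1 : (0:ℝ) < 1 - 1/n := by linarith
    have h2 : Real.exp (-(2/(n:ℝ))) ≤ 1 - 1/n := by
      have he : (1:ℝ) + 2/n ≤ Real.exp (2/n) := by
        have := Real.add_one_le_exp (2/(n:ℝ)); linarith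
      have hp : (0:ℝ) < 1 + 2/n := by positivity
      have ha : Real.exp (-(2/(n:ℝ))) ≤ 1/(1+2/n) := by
        rw [Real.exp_neg, ← one_div]
        exact one_div_le_one_div_of_le hp he
      have hb : (1:ℝ)/(1+2/n) ≤ 1 - 1/n := by
        rw [div_le_iff₀ hp]
        have hr : (1 - 1/(n:ℝ)) * (1 + 2/n) - 1 = 1/n - 2/n^2 := by ring
        have hnn : 2/(n:ℝ)^2 ≤ 1/n := by
          rw [div_le_div_iff₀ (by positivity) hn0]
          nlinarith
        linarith
      linarith
    have h3 : Real.exp (-8) = Real.exp (-(2/(n:ℝ))) ^ (4 * n) := by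
      rw [← Real.exp_nat_mul]
      congr 1
      field_simp
      push_cast; ring
    have h4 : Real.exp (-(2/(n:ℝ))) ^ (4 * n) ≤ (1 - 1/(n:ℝ)) ^ (4 * n) :=
      pow_le_pow_left₀ (Real.exp_pos _).le h2 _
    have h5 : (1 - 1/(n:ℝ)) ^ (4 * n) < (1 - 1/(n:ℝ)) ^ s.card :=
      pow_lt_pow_right_of_lt_one₀ h1 (by
        have : (0:ℝ) < 1/n := by positivity
        linarith) hcard
    linarith [h3 ▸ (h4.trans_lt h5)]
  -- conclude
  rw [hvol1, hvol2, hprod, ← ENNReal.ofReal_mul (Real.exp_pos _).le]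
  have hprodpos : (0:ℝ) < ∏ i, α i := Finset.prod_pos fun i _ => hα i
  have hrhspos : (0:ℝ) < (1 - 1/(n:ℝ)) ^ s.card * ∏ i, α i :=
    mul_pos (pow_pos (by linarith) _) hprodpos
  exact (ENNReal.ofReal_lt_ofReal_iff hrhspos).2
    (mul_lt_mul_of_pos_right hkey hprodpos)
end

section
/- For n ≥ 1 let U_n = (0,2^{-n})^n × ∏_{i>n} T ⊆ T^ω, for 1 ≤ i ≤ n let e_{n,i} ∈ T^ω be the element whose i-th coordinate is 2^{-n} and all other coordinates are 0, and set U_{n,i} = U_n ∪ (e_{n,i} + U_n). Let D₀ = {U_{n,i} : n ≥ 1, 1 ≤ i ≤ n}. Then the maximal operator M_{D₀} is not of weak type (1,1); in fact, for every n ≥ 1, taking f_n = χ_{U_n} one has (1/3)·m({g ∈ T^ω : M_{D₀} f_n(g) > 1/3}) ≥ ((n+1)/3)·‖f_n‖_{L¹}. -/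
open MeasureTheory Filter Topology Set
open scoped ENNReal

noncomputable section

instance : haarTω.IsAddHaarMeasure := Measure.isAddHaarMeasure_addHaarMeasure ⊤

instance : IsProbabilityMeasure haarTω := by
  constructor
  have h : haarTω (⊤ : TopologicalSpace.PositiveCompacts Tω) = 1 :=
    Measure.addHaarMeasure_self
  simpa using h

lemma arc_ne {n : ℕ} (hn : 1 ≤ n) {a b : ℝ} (ha : a ∈ Set.Ioo 0 ((2:ℝ)⁻¹ ^ n))
    (hb : b ∈ Set.Ioo 0 ((2:ℝ)⁻¹ ^ n)) :
    ((a : ℝ) : 𝕋) ≠ (((2:ℝ)⁻¹ ^ n : ℝ) : 𝕋) + (b : 𝕋) := by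
  intro h
  have hl : ((2:ℝ)⁻¹ ^ n) ≤ 2⁻¹ := by
    calc ((2:ℝ)⁻¹ ^ n) ≤ (2:ℝ)⁻¹ ^ 1 :=
      pow_le_pow_of_le_one (by norm_num) (by norm_num) hn
    _ = 2⁻¹ := pow_one _
  have hp : (0:ℝ) < (2:ℝ)⁻¹ ^ n := by positivity
  have h2 : ((a : ℝ) : 𝕋) = (((2:ℝ)⁻¹ ^ n + b : ℝ) : 𝕋) := by
    rw [h, QuotientAddGroup.mk_add]
  rw [AddCircle.coe_eq_coe_iff_of_mem_Ico (p := 1) (a := 0)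
    (by constructor <;> [linarith [ha.1]; linarith [ha.2]])
    (by constructor <;> [linarith [hb.1]; linarith [hb.2]])] at h2
  linarith [ha.2, hb.1]

lemma mem_Ucell {n : ℕ} {x : Tω} : x ∈ Ucell n ↔ ∀ i < n, x i ∈ arc ((2:ℝ)⁻¹ ^ n) := by
  simp only [Ucell, Set.mem_univ_pi]
  constructor
  · intro h i hi; simpa [hi] using h i
  · intro h i
    by_cases hi : i < n
    · simpa [hi] using h i hi
    · simp [hi]

lemma isOpen_arc (l : ℝ) : IsOpen (arc l) :=
  QuotientAddGroup.isOpenMap_coe _ isOpen_Ioo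

lemma isOpen_Ucell (n : ℕ) : IsOpen (Ucell n) := by
  have h : Ucell n = ⋂ i ∈ Finset.range n, (fun g : Tω => g i) ⁻¹' arc ((2:ℝ)⁻¹ ^ n) := by
    ext x; simp [mem_Ucell]
  rw [h]
  exact isOpen_biInter_finset fun i _ => (isOpen_arc _).preimage (continuous_apply i)

lemma Ucell_nonempty (n : ℕ) : (Ucell n).Nonempty := by
  refine ⟨fun _ => (((2:ℝ)⁻¹ ^ (n+1) : ℝ) : 𝕋), mem_Ucell.mpr fun i hi => ?_⟩
  exact ⟨(2:ℝ)⁻¹ ^ (n+1),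
    ⟨by positivity, pow_lt_pow_right_of_lt_one₀ (by norm_num) (by norm_num) (Nat.lt_succ_self n)⟩,
    rfl⟩

lemma measure_Ucell_pos (n : ℕ) : 0 < haarTω (Ucell n) :=
  (isOpen_Ucell n).measure_pos haarTω (Ucell_nonempty n)

def Wset (n i : ℕ) : Set Tω := (fun x => evec n i + x) '' Ucell n

lemma measurableSet_Ucell (n : ℕ) : MeasurableSet (Ucell n) :=
  (isOpen_Ucell n).measurableSet

lemma measurableSet_Wset (n i : ℕ) : MeasurableSet (Wset n i) := by
  rw [Wset, Set.image_add_left]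
  exact (measurableSet_Ucell n).preimage (measurable_const_add _)

lemma measure_Wset (n i : ℕ) : haarTω (Wset n i) = haarTω (Ucell n) := by
  rw [Wset, Set.image_add_left, measure_preimage_add]

lemma disj_U_W {n i : ℕ} (hn : 1 ≤ n) (hi : i < n) : Disjoint (Ucell n) (Wset n i) := by
  rw [Set.disjoint_left]
  rintro x hxU ⟨u, huU, rfl⟩
  obtain ⟨a, ha, hax⟩ := mem_Ucell.mp hxU i hi
  obtain ⟨b, hb, hbu⟩ := mem_Ucell.mp huU i hi
  refine arc_ne hn ha hb ?_
  have hax' : ((a:ℝ):𝕋) = (evec n i + u) i := hax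
  have hbu' : ((b:ℝ):𝕋) = u i := hbu
  have h1 : (evec n i + u) i = (((2:ℝ)⁻¹ ^ n : ℝ) : 𝕋) + u i := by simp [evec]
  rw [hax', h1, hbu']

lemma disj_W_W {n i j : ℕ} (hn : 1 ≤ n) (hi : i < n) (hj : j < n) (hij : i ≠ j) :
    Disjoint (Wset n i) (Wset n j) := by
  rw [Set.disjoint_left]
  rintro x ⟨u, huU, rfl⟩ ⟨v, hvU, hv⟩
  obtain ⟨a, ha, hav⟩ := mem_Ucell.mp hvU i hi
  obtain ⟨b, hb, hbu⟩ := mem_Ucell.mp huU i hi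
  refine arc_ne hn ha hb ?_
  have hav' : ((a:ℝ):𝕋) = v i := hav
  have hbu' : ((b:ℝ):𝕋) = u i := hbu
  have hv' : evec n j + v = evec n i + u := hv
  have h1 : (evec n i + u) i = (((2:ℝ)⁻¹ ^ n : ℝ) : 𝕋) + u i := by simp [evec]
  have h2 : (evec n j + v) i = v i := by simp [evec, hij]
  rw [hav', ← h2, hv', h1, hbu']


lemma measure_Uni {n i : ℕ} (hn : 1 ≤ n) (hi : i < n) :
    haarTω (Uni n i) = 2 * haarTω (Ucell n) := by
  rw [show Uni n i = Ucell n ∪ Wset n i from rfl,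
    measure_union (disj_U_W hn hi) (measurableSet_Wset n i), measure_Wset, two_mul]

lemma avg_Uni {n i : ℕ} (hn : 1 ≤ n) (hi : i < n) :
    avg ((Ucell n).indicator fun _ => (1:ℝ)) (Uni n i) = 1/2 := by
  have hU := measurableSet_Ucell n
  have hfin : haarTω (Ucell n) ≠ ⊤ := measure_ne_top _ _
  have hpos : 0 < (haarTω (Ucell n)).toReal :=
    ENNReal.toReal_pos (measure_Ucell_pos n).ne' hfin
  rw [avg, setAverage_eq, setIntegral_indicator hU,
      Set.inter_eq_self_of_subset_right (show Ucell n ⊆ Uni n i from Set.subset_union_left),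
      setIntegral_const, measureReal_def, measureReal_def, measure_Uni hn hi, ENNReal.toReal_mul]
  simp only [smul_eq_mul, ENNReal.toReal_ofNat, mul_one]
  field_simp

lemma integral_abs_indicator (n : ℕ) :
    ∫ x, |((Ucell n).indicator fun _ => (1:ℝ)) x| ∂haarTω = (haarTω (Ucell n)).toReal := by
  have h : ∀ x, |((Ucell n).indicator fun _ => (1:ℝ)) x|
      = (Ucell n).indicator (fun _ => (1:ℝ)) x :=
    fun x => abs_of_nonneg (Set.indicator_nonneg (fun _ _ => zero_le_one) x)
  simp_rw [h]
  rw [integral_indicator_const (1:ℝ) (measurableSet_Ucell n)]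
  simp
  rfl

lemma D0_key (n : ℕ) (hn : 1 ≤ n) :
    ((n:ℝ) + 1) * (haarTω (Ucell n)).toReal ≤
      (haarTω {g | maximalGT (basisOf D0)
        ((Ucell n).indicator fun _ => (1:ℝ)) g (1/3)}).toReal := by
  set f : Tω → ℝ := (Ucell n).indicator fun _ => (1:ℝ) with hf
  set E := {g | maximalGT (basisOf D0) f g (1/3)} with hE
  have hmemD0 : ∀ i < n, Uni n i ∈ D0 := fun i hi => ⟨n, hn, i, hi, rfl⟩
  have havg : ∀ i < n, (1:ℝ)/3 < |avg f (Uni n i)| := by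
    intro i hi
    rw [hf, avg_Uni hn hi, abs_of_nonneg (by norm_num)]
    norm_num
  have hUE : Ucell n ⊆ E := by
    intro g hg
    exact ⟨Uni n 0, ⟨hmemD0 0 hn, subset_closure (Set.mem_union_left _ hg)⟩, havg 0 hn⟩
  have hWE : ∀ i < n, Wset n i ⊆ E := by
    intro i hi g hg
    exact ⟨Uni n i, ⟨hmemD0 i hi, subset_closure (Set.mem_union_right _ hg)⟩, havg i hi⟩
  have hbig : ((n:ℝ≥0∞) + 1) * haarTω (Ucell n) ≤ haarTω E := by
    have hsub : Ucell n ∪ ⋃ i ∈ Finset.range n, Wset n i ⊆ E := by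
      refine Set.union_subset hUE ?_
      exact Set.iUnion₂_subset fun i hi => hWE i (Finset.mem_range.mp hi)
    refine le_trans (le_of_eq ?_) (measure_mono hsub)
    have hdisj : Disjoint (Ucell n) (⋃ i ∈ Finset.range n, Wset n i) :=
      Set.disjoint_iUnion₂_right.mpr fun i hi => disj_U_W hn (Finset.mem_range.mp hi)
    have hpd : Set.PairwiseDisjoint ↑(Finset.range n) (Wset n) := by
      intro i hi j hj hij
      exact disj_W_W hn (Finset.mem_range.mp hi) (Finset.mem_range.mp hj) hij
    rw [measure_union hdisj
        ((Finset.range n).measurableSet_biUnion fun i _ => measurableSet_Wset n i),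
      measure_biUnion_finset hpd fun i _ => measurableSet_Wset n i,
      Finset.sum_congr rfl fun i _ => measure_Wset n i,
      Finset.sum_const, Finset.card_range, nsmul_eq_mul]
    ring
  have hEfin : haarTω E ≠ ⊤ := measure_ne_top _ _
  have h := ENNReal.toReal_mono hEfin hbig
  rwa [ENNReal.toReal_mul, show ((n:ℝ≥0∞)+1).toReal = (n:ℝ)+1 by rw [ENNReal.toReal_add (ENNReal.natCast_ne_top n) ENNReal.one_ne_top, ENNReal.toReal_natCast, ENNReal.toReal_one]] at h


end

/-- The maximal operator of `D₀ = {U_{n,i}}` is not of weak type (1,1);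
in fact for every `n ≥ 1`, with `fₙ = χ_{Uₙ}`,
`(1/3)·m({M_{D₀} fₙ > 1/3}) ≥ ((n+1)/3)·‖fₙ‖₁`. -/
theorem D0_maximal_not_weakType11 :
    ¬ WeakType11 (basisOf D0) ∧
    ∀ n : ℕ, 1 ≤ n →
      ((n : ℝ) + 1) / 3 * ∫ x, |(Ucell n).indicator (fun _ => (1 : ℝ)) x| ∂haarTω ≤
        1 / 3 * (haarTω {g | maximalGT (basisOf D0)
          ((Ucell n).indicator fun _ => (1 : ℝ)) g (1 / 3)}).toReal := by
  have part2 : ∀ n : ℕ, 1 ≤ n →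
      ((n : ℝ) + 1) / 3 * ∫ x, |(Ucell n).indicator (fun _ => (1 : ℝ)) x| ∂haarTω ≤
        1 / 3 * (haarTω {g | maximalGT (basisOf D0)
          ((Ucell n).indicator fun _ => (1 : ℝ)) g (1 / 3)}).toReal := by
    intro n hn
    rw [integral_abs_indicator n]
    have hkey := D0_key n hn
    set a := (haarTω (Ucell n)).toReal
    calc ((n:ℝ)+1)/3 * a = 1/3 * (((n:ℝ)+1) * a) := by ring
      _ ≤ _ := by linarith
  refine ⟨?_, part2⟩
  rintro ⟨C, hC, hbound⟩
  obtain ⟨n, hCn⟩ := exists_nat_gt (3*C)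
  have hn1 : 1 ≤ n := by
    rcases Nat.eq_zero_or_pos n with h | h
    · subst h; simp only [Nat.cast_zero] at hCn; linarith
    · exact h
  have hInt : Integrable ((Ucell n).indicator fun _ => (1:ℝ)) haarTω :=
    (integrable_const (1:ℝ)).indicator (measurableSet_Ucell n)
  have h3 := hbound _ hInt (1/3) (by norm_num)
  have h2 := part2 n hn1
  rw [integral_abs_indicator n] at h2 h3
  set a := (haarTω (Ucell n)).toReal
  have ha : 0 < a := ENNReal.toReal_pos (measure_Ucell_pos n).ne' (measure_ne_top _ _)
  have h4 : ((n:ℝ)+1)/3 * a ≤ C * a := le_trans h2 h3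
  have h5 : ((n:ℝ)+1)/3 ≤ C := le_of_mul_le_mul_right (by linarith) ha
  linarith
end

section
/- Let B be a general differentiation basis on T^ω satisfying condition (M). If lim_{k→∞} δ_k^B = δ₀ for some δ₀ > 0, then B does not differentiate L¹(T^ω): there exist f ∈ L¹(T^ω) and a set of strictly positive Haar measure of points g such that for each such g some sequence S_n ⇒ g satisfies f_{S_n} ↛ f(g). -/
open MeasureTheory Filter Topology Set
open scoped ENNReal

section Aux

lemma rho_nonneg' (g h : Tω) : 0 ≤ rho g h :=
  tsum_nonneg fun n => mul_nonneg (by positivity) (norm_nonneg _)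

lemma diam_nonneg' (E : Set Tω) : 0 ≤ diam E := by
  apply Real.sSup_nonneg
  rintro r ⟨a, ha, b, hb, rfl⟩
  exact rho_nonneg' a b

lemma haarTω_univ : haarTω Set.univ = 1 := by
  have := MeasureTheory.Measure.addHaarMeasure_self
    (K₀ := (⊤ : TopologicalSpace.PositiveCompacts Tω))
  simpa [haarTω] using this

lemma haarTω_le_one (E : Set Tω) : haarTω E ≤ 1 :=
  haarTω_univ ▸ measure_mono (Set.subset_univ E)

lemma haarTω_ne_top (E : Set Tω) : haarTω E ≠ ∞ :=
  (lt_of_le_of_lt (haarTω_le_one E) ENNReal.one_lt_top).ne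

end Aux

/-- Theorem 4.3, second part: If `B` satisfies condition (M) and
`δ_k^B → δ₀ > 0`, then `B` does not differentiate `L¹(𝕋^ω)`: there exist `f ∈ L¹` and a
set of strictly positive measure of points `g` each admitting a contracting sequence
along which the averages of `f` fail to converge to `f g`. -/
theorem not_differentiatesL1_of_deltaK_tendsto_pos (bas : Tω → Set (Set Tω))
    (hbas : IsGeneralBasis bas) (hM : CondM bas) (δ₀ : ℝ≥0∞) (hδ₀ : 0 < δ₀)
    (h : Tendsto (deltaK bas) atTop (𝓝 δ₀)) :
    ∃ f : Tω → ℝ, Integrable f haarTω ∧ ∃ E : Set Tω, 0 < haarTω E ∧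
      ∀ g ∈ E, ∃ S : ℕ → Set Tω, ContractsTo bas S g ∧
        ¬ Tendsto (fun n => avg f (S n)) atTop (𝓝 (f g)) := by
  classical
  obtain ⟨Fm, hFmc, hFm⟩ := hM
  -- threshold `c`
  set c : ℝ≥0∞ := min δ₀ 1 / 2 with hc_def
  have hmne : min δ₀ 1 ≠ 0 := (lt_min hδ₀ zero_lt_one).ne'
  have hmnt : min δ₀ 1 ≠ ∞ := ((min_le_right _ _).trans_lt ENNReal.one_lt_top).ne
  have hc0 : 0 < c := ENNReal.half_pos hmne
  have hcδ : c < δ₀ := lt_of_lt_of_le (ENNReal.half_lt_self hmne hmnt) (min_le_left _ _)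
  have hev : ∀ᶠ k in atTop, c < deltaK bas k := h.eventually (eventually_gt_nhds hcδ)
  obtain ⟨K₁, hK₁⟩ := eventually_atTop.mp hev
  obtain ⟨n₀, hn₀⟩ := ENNReal.exists_inv_two_pow_lt (a := c / 2) (ENNReal.half_pos hc0.ne').ne'
  set K := max K₁ (n₀ + 1) with hK_def
  -- selection of witnesses for each `j`
  have hsel : ∀ j : ℕ, ∃ E : Set Tω, MeasurableSet E ∧ c < haarTω E ∧
      ∃ f : Tω → ℝ, Integrable f haarTω ∧ ∃ lam : ℝ, 0 < lam ∧
        (∀ g ∈ E, maximalGT bas f g lam) ∧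
        (2 : ℝ) ^ (K + j) * ∫ x, |f x| ∂haarTω < lam := by
    intro j
    have h1 : c < deltaK bas (K + j) := hK₁ _ (le_trans (le_max_left _ _) (Nat.le_add_right _ _))
    rw [deltaK, lt_sSup_iff] at h1
    obtain ⟨v, hv, hcv⟩ := h1
    obtain ⟨E, hEm, rfl, f, hf, lam, hlam, hmax, hkey⟩ := hv
    refine ⟨E, hEm, hcv, f, hf, lam, hlam, hmax, ?_⟩
    have hle : ENNReal.ofReal lam * haarTω E ≤ ENNReal.ofReal lam := by
      calc ENNReal.ofReal lam * haarTω E ≤ ENNReal.ofReal lam * 1 := by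
            gcongr; exact haarTω_le_one E
        _ = ENNReal.ofReal lam := mul_one _
    exact (ENNReal.ofReal_lt_ofReal_iff hlam).mp (lt_of_lt_of_le hkey hle)
  choose E hEmeas hEc f hfint lam hlampos hmax hkey using hsel
  set I : ℕ → ℝ := fun j => ∫ x, |f j x| ∂haarTω with hI_def
  have hInn : ∀ j, 0 ≤ I j := fun j => integral_nonneg fun x => abs_nonneg _
  have hIb : ∀ j, I j ≤ lam j * (1 / 2 : ℝ) ^ (K + j) := by
    intro j
    have hpow : ((1 : ℝ) / 2) ^ (K + j) * (2 : ℝ) ^ (K + j) = 1 := by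
      rw [← mul_pow]; norm_num
    calc I j = ((1 / 2 : ℝ) ^ (K + j) * (2 : ℝ) ^ (K + j)) * I j := by rw [hpow, one_mul]
      _ = (1 / 2 : ℝ) ^ (K + j) * ((2 : ℝ) ^ (K + j) * I j) := by ring
      _ ≤ (1 / 2 : ℝ) ^ (K + j) * lam j :=
          mul_le_mul_of_nonneg_left (hkey j).le (by positivity)
      _ = lam j * (1 / 2 : ℝ) ^ (K + j) := mul_comm _ _
  -- the function `f₀`
  set G : Tω → ℝ≥0∞ := fun x => ∑' j, ENNReal.ofReal ((lam j)⁻¹ * |f j x|) with hG_def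
  have hterm_meas : ∀ j,
      AEMeasurable (fun x => ENNReal.ofReal ((lam j)⁻¹ * |f j x|)) haarTω := by
    intro j
    have h1 : AEMeasurable (fun x => (lam j)⁻¹ * |f j x|) haarTω := by
      simpa [Real.norm_eq_abs] using
        ((hfint j).1.norm.aemeasurable.const_mul (lam j)⁻¹)
    exact ENNReal.measurable_ofReal.comp_aemeasurable h1
  have hGmeas : AEMeasurable G haarTω := AEMeasurable.ennreal_tsum hterm_meas
  have hGlint : ∫⁻ x, G x ∂haarTω ≤ 2⁻¹ ^ K * 2 := by
    have h1 : ∫⁻ x, G x ∂haarTω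
        = ∑' j, ∫⁻ x, ENNReal.ofReal ((lam j)⁻¹ * |f j x|) ∂haarTω :=
      lintegral_tsum hterm_meas
    have h2 : ∀ j, ∫⁻ x, ENNReal.ofReal ((lam j)⁻¹ * |f j x|) ∂haarTω
        ≤ (2⁻¹ : ℝ≥0∞) ^ (K + j) := by
      intro j
      have hint : Integrable (fun x => (lam j)⁻¹ * |f j x|) haarTω :=
        (hfint j).abs.const_mul _
      rw [← ofReal_integral_eq_lintegral_ofReal hint
        (Filter.Eventually.of_forall fun x =>
          mul_nonneg (inv_nonneg.2 (hlampos j).le) (abs_nonneg _))]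
      rw [integral_const_mul]
      have h3 : (lam j)⁻¹ * I j ≤ (1 / 2 : ℝ) ^ (K + j) := by
        rw [inv_mul_le_iff₀ (hlampos j)]
        exact hIb j
      calc ENNReal.ofReal ((lam j)⁻¹ * I j)
          ≤ ENNReal.ofReal ((1 / 2 : ℝ) ^ (K + j)) := ENNReal.ofReal_le_ofReal h3
        _ = (2⁻¹ : ℝ≥0∞) ^ (K + j) := by
            rw [one_div, ENNReal.ofReal_pow (by norm_num),
              ENNReal.ofReal_inv_of_pos (by norm_num), ENNReal.ofReal_ofNat]
    calc ∫⁻ x, G x ∂haarTω = _ := h1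
      _ ≤ ∑' j, (2⁻¹ : ℝ≥0∞) ^ (K + j) := ENNReal.tsum_le_tsum h2
      _ = 2⁻¹ ^ K * ∑' j, (2⁻¹ : ℝ≥0∞) ^ j := by
          rw [← ENNReal.tsum_mul_left]
          congr 1; funext j; rw [pow_add]
      _ ≤ 2⁻¹ ^ K * 2 := by
          gcongr
          rw [ENNReal.tsum_geometric, ENNReal.one_sub_inv_two, inv_inv]
  have htK_fin : (2⁻¹ : ℝ≥0∞) ^ K * 2 < ∞ := by
    refine ENNReal.mul_lt_top ?_ (by norm_num)
    exact (ENNReal.pow_lt_top (by simp [ENNReal.inv_lt_top]))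
  have hGfin : ∫⁻ x, G x ∂haarTω ≠ ∞ := (lt_of_le_of_lt hGlint htK_fin).ne
  have hGae : ∀ᵐ x ∂haarTω, G x < ∞ := ae_lt_top' hGmeas hGfin
  set f0 : Tω → ℝ := fun x => (G x).toReal with hf0_def
  have hf0int : Integrable f0 haarTω := by
    refine ⟨(hGmeas.ennreal_toReal).aestronglyMeasurable, ?_⟩
    refine lt_of_le_of_lt (lintegral_mono fun x => ?_) (lt_of_le_of_lt hGlint htK_fin)
    show ‖(G x).toReal‖ₑ ≤ G x
    rw [Real.enorm_eq_ofReal ENNReal.toReal_nonneg]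
    exact ENNReal.ofReal_toReal_le
  have hdom : ∀ j, ∀ᵐ x ∂haarTω, (lam j)⁻¹ * |f j x| ≤ f0 x := by
    intro j
    filter_upwards [hGae] with x hx
    have h1 : ENNReal.ofReal ((lam j)⁻¹ * |f j x|) ≤ G x := ENNReal.le_tsum j
    have h2 := ENNReal.toReal_mono hx.ne h1
    rwa [ENNReal.toReal_ofReal
      (mul_nonneg (inv_nonneg.2 (hlampos j).le) (abs_nonneg _))] at h2
  -- the bad set
  set Bad : Set Tω := {x | (1 : ℝ≥0∞) ≤ G x} ∪ Fmᶜ with hBad_def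
  have hBadm : haarTω Bad < c := by
    have h1 : haarTω {x | (1 : ℝ≥0∞) ≤ G x} ≤ ∫⁻ x, G x ∂haarTω := by
      simpa using mul_meas_ge_le_lintegral₀ hGmeas 1
    calc haarTω Bad ≤ haarTω {x | (1 : ℝ≥0∞) ≤ G x} + haarTω Fmᶜ := measure_union_le _ _
      _ ≤ 2⁻¹ ^ K * 2 + 0 := add_le_add (h1.trans hGlint) hFmc.le
      _ = 2⁻¹ ^ K * 2 := add_zero _
      _ ≤ 2⁻¹ ^ (n₀ + 1) * 2 := by
          refine mul_le_mul_left ?_ 2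
          rw [← ENNReal.inv_pow, ← ENNReal.inv_pow]
          exact ENNReal.inv_le_inv.2 (pow_le_pow_right₀ one_le_two (le_max_right _ _))
      _ = 2⁻¹ ^ n₀ := by
          rw [pow_succ, mul_assoc, ENNReal.inv_mul_cancel two_ne_zero ENNReal.ofNat_ne_top,
            mul_one]
      _ < c / 2 := hn₀
      _ ≤ c := ENNReal.half_le_self
  -- the limsup set
  set LS : Set Tω := ⋂ n, ⋃ j, ⋃ (_ : n ≤ j), E j with hLS_def
  have hLSmem : ∀ g ∈ LS, ∀ n : ℕ, ∃ j, n ≤ j ∧ g ∈ E j := by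
    intro g hg n
    have := Set.mem_iInter.mp hg n
    simpa using this
  have hLSc : c ≤ haarTω LS := by
    have hmono : Antitone (fun n => ⋃ j, ⋃ (_ : n ≤ j), E j) := by
      intro a b hab x hx
      simp only [Set.mem_iUnion] at hx ⊢
      obtain ⟨j, hbj, hxj⟩ := hx
      exact ⟨j, hab.trans hbj, hxj⟩
    have hten := tendsto_measure_iInter_atTop (μ := haarTω)
      (fun n => (MeasurableSet.iUnion fun j =>
        MeasurableSet.iUnion fun _ => hEmeas j).nullMeasurableSet)
      hmono ⟨0, haarTω_ne_top _⟩
    refine ge_of_tendsto hten ?_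
    filter_upwards with n
    refine le_trans (hEc n).le (measure_mono ?_)
    intro x hx
    simp only [Set.mem_iUnion]
    exact ⟨n, le_rfl, hx⟩
  set Eset : Set Tω := LS \ Bad with hEset_def
  have hpos : 0 < haarTω Eset := by
    rcases eq_or_lt_of_le (zero_le : 0 ≤ haarTω Eset) with h0 | h0
    · exfalso
      have hsub : LS ⊆ Eset ∪ Bad := by
        intro x hx
        by_cases hxB : x ∈ Bad
        · exact Or.inr hxB
        · exact Or.inl ⟨hx, hxB⟩
      have : haarTω LS ≤ haarTω Eset + haarTω Bad :=
        (measure_mono hsub).trans (measure_union_le _ _)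
      rw [← h0, zero_add] at this
      exact absurd (lt_of_le_of_lt (hLSc.trans this) hBadm) (lt_irrefl c)
    · exact h0
  refine ⟨f0, hf0int, Eset, hpos, ?_⟩
  intro g hg
  obtain ⟨hgLS, hgBad⟩ := hg
  have hgF : g ∈ Fm := by
    by_contra hc
    exact hgBad (Or.inr hc)
  have hGg : G g < 1 := lt_of_not_ge fun hcon => hgBad (Or.inl hcon)
  have hf0g : f0 g < 1 := by
    have h1 : (G g).toReal < (1 : ℝ≥0∞).toReal :=
      (ENNReal.toReal_lt_toReal (hGg.trans ENNReal.one_lt_top).ne ENNReal.one_ne_top).mpr hGg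
    simpa using h1
  -- selection of the contracting sets
  have hsel2 : ∀ n : ℕ, ∃ B, B ∈ bas g ∧ (haarTω B).toReal < (1 / 2 : ℝ) ^ n ∧
      1 < avg f0 B := by
    intro n
    obtain ⟨j, hjn, hgEj⟩ := hLSmem g hgLS n
    obtain ⟨B, hBbas, hBavg⟩ := hmax j g hgEj
    obtain ⟨hBm, hBpos, -⟩ := hbas.1 g B hBbas
    have hBfin : haarTω B ≠ ∞ := haarTω_ne_top B
    set t := (haarTω B).toReal with ht_def
    have ht0 : 0 < t := ENNReal.toReal_pos hBpos.ne' hBfin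
    have havg_eq : avg (f j) B = t⁻¹ * ∫ x in B, f j x ∂haarTω := by
      rw [avg, setAverage_eq, smul_eq_mul]; rfl
    have hintB : |∫ x in B, f j x ∂haarTω| ≤ ∫ x in B, |f j x| ∂haarTω := by
      simpa [Real.norm_eq_abs] using
        norm_integral_le_integral_norm (μ := haarTω.restrict B) (f j)
    have hintB2 : ∫ x in B, |f j x| ∂haarTω ≤ I j :=
      setIntegral_le_integral (hfint j).abs (Filter.Eventually.of_forall fun x => abs_nonneg _)
    have hlower : lam j * t < ∫ x in B, |f j x| ∂haarTω := by
      have h1 : lam j < t⁻¹ * |∫ x in B, f j x ∂haarTω| := by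
        rw [havg_eq, abs_mul, abs_of_nonneg (inv_nonneg.2 ht0.le)] at hBavg
        exact hBavg
      have h2 : lam j * t < (t⁻¹ * |∫ x in B, f j x ∂haarTω|) * t :=
        mul_lt_mul_of_pos_right h1 ht0
      rw [mul_comm (t⁻¹ * _) t, ← mul_assoc, mul_inv_cancel₀ ht0.ne', one_mul] at h2
      exact lt_of_lt_of_le h2 hintB
    have htb : t < (1 / 2 : ℝ) ^ n := by
      have h3 : lam j * t < lam j * (1 / 2 : ℝ) ^ (K + j) :=
        lt_of_lt_of_le (lt_of_lt_of_le hlower hintB2) (hIb j)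
      have h4 : t < (1 / 2 : ℝ) ^ (K + j) := lt_of_mul_lt_mul_left h3 (hlampos j).le
      exact lt_of_lt_of_le h4
        (pow_le_pow_of_le_one (by norm_num) (by norm_num)
          (le_trans hjn (Nat.le_add_left _ _)))
    have hdomB : ∀ᵐ x ∂haarTω.restrict B, (lam j)⁻¹ * |f j x| ≤ f0 x :=
      ae_restrict_of_ae (hdom j)
    have h3 : ∫ x in B, (lam j)⁻¹ * |f j x| ∂haarTω ≤ ∫ x in B, f0 x ∂haarTω :=
      integral_mono_ae (((hfint j).abs.const_mul _).integrableOn)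
        hf0int.integrableOn hdomB
    have h4 : t < ∫ x in B, f0 x ∂haarTω := by
      calc t = (lam j)⁻¹ * (lam j * t) := by
            rw [← mul_assoc, inv_mul_cancel₀ (hlampos j).ne', one_mul]
        _ < (lam j)⁻¹ * ∫ x in B, |f j x| ∂haarTω :=
            mul_lt_mul_of_pos_left hlower (inv_pos.2 (hlampos j))
        _ = ∫ x in B, (lam j)⁻¹ * |f j x| ∂haarTω := (integral_const_mul _ _).symm
        _ ≤ ∫ x in B, f0 x ∂haarTω := h3
    have h5 : 1 < avg f0 B := by
      rw [avg, setAverage_eq, smul_eq_mul]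
      have h6 : t⁻¹ * t < t⁻¹ * ∫ x in B, f0 x ∂haarTω :=
        mul_lt_mul_of_pos_left h4 (inv_pos.2 ht0)
      rwa [inv_mul_cancel₀ ht0.ne'] at h6
    exact ⟨B, hBbas, htb, h5⟩
  choose Bn hBbas hBsize hBavg using hsel2
  -- diameters of `Bn` tend to 0
  have hBdiam : Tendsto (fun n => diam (Bn n)) atTop (𝓝 0) := by
    rw [Metric.tendsto_atTop]
    intro ε hε
    obtain ⟨δ, hδ0, hδ⟩ := hFm g hgF ε hε
    obtain ⟨N, hN⟩ := exists_pow_lt_of_lt_one hδ0 (by norm_num : (1 / 2 : ℝ) < 1)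
    refine ⟨N, fun n hn => ?_⟩
    have h1 : (haarTω (Bn n)).toReal < δ :=
      lt_of_lt_of_le (lt_of_lt_of_le (hBsize n)
        (pow_le_pow_of_le_one (by norm_num) (by norm_num) hn)) hN.le
    have h2 : haarTω (Bn n) < ENNReal.ofReal δ := by
      rw [← ENNReal.ofReal_toReal (haarTω_ne_top (Bn n))]
      exact (ENNReal.ofReal_lt_ofReal_iff hδ0).mpr h1
    have h3 := hδ (Bn n) (hBbas n) h2
    rw [Real.dist_eq, sub_zero, abs_of_nonneg (diam_nonneg' _)]
    exact h3
  -- interleave with a default contracting sequence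
  obtain ⟨T, hTmem, hTdiam⟩ := hbas.2 g
  refine ⟨fun n => if Even n then T (n / 2) else Bn (n / 2), ⟨fun n => ?_, ?_⟩, ?_⟩
  · dsimp only
    split
    · exact hTmem _
    · exact hBbas _
  · rw [Metric.tendsto_atTop] at hTdiam hBdiam ⊢
    intro ε hε
    obtain ⟨N₁, h1⟩ := hTdiam ε hε
    obtain ⟨N₂, h2⟩ := hBdiam ε hε
    refine ⟨2 * max N₁ N₂, fun n hn => ?_⟩
    have hdiv : max N₁ N₂ ≤ n / 2 := by omega
    dsimp only
    split
    · exact h1 _ (le_trans (le_max_left _ _) hdiv)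
    · exact h2 _ (le_trans (le_max_right _ _) hdiv)
  · intro hten
    have hev2 : ∀ᶠ n in atTop,
        avg f0 (if Even n then T (n / 2) else Bn (n / 2)) < 1 :=
      hten.eventually_lt_const hf0g
    obtain ⟨N, hN⟩ := eventually_atTop.mp hev2
    have hodd : ¬ Even (2 * N + 1) := by simp [parity_simps]
    have h1 := hN (2 * N + 1) (by omega)
    rw [if_neg hodd] at h1
    have h2 := hBavg ((2 * N + 1) / 2)
    linarith
end
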